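/- Let ε, r > 0 and x₀ ∈ ℝ². If an affine function h(x) = x·y + η (with y ∈ ℝ², η ∈ ℝ) satisfies h ≤ ε on the boundary of the disk B(x₀, r), and h(x₁) ≥ −ε for some x₁ ∈ B(x₀, r/2), then ‖y‖ ≤ 4ε/r. -/

import Mathlib

open Metric

/-- If an affine function `h x = ⟪x, y⟫ + η` on `ℝ²` is at most `ε` on the boundary circle of
`B(x₀, r)` and at least `-ε` at some point of `B(x₀, r/2)`, then `‖y‖ ≤ 4ε/r`. -/
theorem affine_gradient_bound
    (ε r : ℝ) (hε : 0 < ε) (hr : 0 < r)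
    (x₀ : EuclideanSpace ℝ (Fin 2)) (y : EuclideanSpace ℝ (Fin 2)) (η : ℝ)
    (hupper : ∀ x ∈ sphere x₀ r, (inner ℝ x y : ℝ) + η ≤ ε)
    (x₁ : EuclideanSpace ℝ (Fin 2)) (hx₁ : x₁ ∈ ball x₀ (r / 2))
    (hlower : -ε ≤ (inner ℝ x₁ y : ℝ) + η) :
    ‖y‖ ≤ 4 * ε / r := by
  rcases eq_or_ne y 0 with h0 | h0
  · simp [h0]
    positivity
  · have hny : 0 < ‖y‖ := norm_pos_iff.mpr h0
    set x : EuclideanSpace ℝ (Fin 2) := x₀ + (r / ‖y‖) • y with hx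
    have hxs : x ∈ sphere x₀ r := by
      simp only [mem_sphere, dist_eq_norm, hx, add_sub_cancel_left, norm_smul,
        norm_div, Real.norm_eq_abs, abs_of_pos hr, abs_of_pos hny]
      field_simp
    have hux := hupper x hxs
    have hix : (inner ℝ x y : ℝ) = inner ℝ x₀ y + r * ‖y‖ := by
      rw [hx, inner_add_left, real_inner_smul_left, real_inner_self_eq_norm_sq]
      field_simp
    -- bound inner x₁ y
    have hb : (inner ℝ x₁ y : ℝ) ≤ inner ℝ x₀ y + (r / 2) * ‖y‖ := by
      have : (inner ℝ x₁ y : ℝ) - inner ℝ x₀ y = inner ℝ (x₁ - x₀) y := by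
        rw [inner_sub_left]
      have h2 : (inner ℝ (x₁ - x₀) y : ℝ) ≤ ‖x₁ - x₀‖ * ‖y‖ :=
        real_inner_le_norm _ _
      have h3 : ‖x₁ - x₀‖ ≤ r / 2 := by
        have := mem_ball.mp hx₁
        rw [dist_eq_norm] at this
        linarith
      nlinarith [norm_nonneg y]
    rw [hix] at hux
    have key : r / 2 * ‖y‖ ≤ 2 * ε := by nlinarith
    rw [le_div_iff₀ hr]
    nlinarith
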